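/- Let f : M → M' be an injective R-module homomorphism. If N is a strongly 2-absorbing second submodule of M, then f(N) is a 2-absorbing second submodule of M'. -/
import Mathlib


open Pointwise

/-- A proper submodule `L` is completely irreducible if whenever `L` is the
intersection of a family of submodules, it equals one of them. -/
def IsCompletelyIrreducible {R M : Type*} [CommRing R] [AddCommGroup M] [Module R M]
    (L : Submodule R M) : Prop :=
  L ≠ ⊤ ∧ ∀ S : Set (Submodule R M), L = sInf S → L ∈ S

/-- A nonzero submodule `N` is 2-absorbing second if whenever `a b : R`, `L` is a
completely irreducible submodule, and `a • b • N ⊆ L`, then `a • N ⊆ L` or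
`b • N ⊆ L` or `a * b ∈ Ann(N)`. -/
def Is2AbsorbingSecond {R M : Type*} [CommRing R] [AddCommGroup M] [Module R M]
    (N : Submodule R M) : Prop :=
  N ≠ ⊥ ∧ ∀ (a b : R) (L : Submodule R M), IsCompletelyIrreducible L →
    a • b • N ≤ L → a • N ≤ L ∨ b • N ≤ L ∨ a * b ∈ N.annihilator

/-- A nonzero submodule `N` is strongly 2-absorbing second: whenever `a b : R` and
`K` is a submodule with `a • b • N ⊆ K`, then `a • N ⊆ K` or `b • N ⊆ K` or
`a • b • N = 0`. -/
def IsStrongly2AbsorbingSecond {R M : Type*} [CommRing R] [AddCommGroup M] [Module R M]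
    (N : Submodule R M) : Prop :=
  N ≠ ⊥ ∧ ∀ (a b : R) (K : Submodule R M), a • b • N ≤ K →
    a • N ≤ K ∨ b • N ≤ K ∨ a • b • N = ⊥

theorem map_strongly2AbsorbingSecond
    {R M M' : Type*} [CommRing R] [AddCommGroup M] [Module R M]
    [AddCommGroup M'] [Module R M']
    (f : M →ₗ[R] M') (hf : Function.Injective f)
    (N : Submodule R M) (hN : IsStrongly2AbsorbingSecond N) :
    Is2AbsorbingSecond (N.map f) := by

  obtain ⟨hN0, hN2⟩ := hN
  constructor
  · intro h
    exact hN0 (Submodule.map_injective_of_injective hf (by rw [h, Submodule.map_bot]))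
  · intro a b L _ habL
    have hmap : ∀ (c : R) (K : Submodule R M), c • K.map f = (c • K).map f := by
      intro c K
      exact (Submodule.map_pointwise_smul c K f).symm
    have key : a • b • N ≤ L.comap f := by
      rw [← Submodule.map_le_iff_le_comap]
      rwa [hmap, hmap] at habL
    rcases hN2 a b (L.comap f) key with h | h | h
    · left
      rw [hmap, Submodule.map_le_iff_le_comap]
      exact h
    · right; left
      rw [hmap, Submodule.map_le_iff_le_comap]
      exact h
    · right; right
      rw [Submodule.mem_annihilator]
      rintro _ ⟨n, hn, rfl⟩
      have : (a * b) • n = 0 := by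
        have hmem : (a * b) • n ∈ a • b • N := by
          rw [mul_smul]
          exact Submodule.smul_mem_pointwise_smul _ a _
            (Submodule.smul_mem_pointwise_smul n b N hn)
        rw [h] at hmem
        exact hmem
      rw [← map_smul, this, map_zero]
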